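/- Let $k \ge 2$ be an integer and let $h:\mathcal S\times\mathcal X\to\mathbb Z_q^m$ be $k^*$-universal, meaning that for every $l \in \{2,\dots,k\}$ and every $l$-tuple of distinct inputs $x_1,\dots,x_l$, $\Pr_{S}[h(S,x_1)=\cdots=h(S,x_l)] \le q^{-m(l-1)}$ with $S$ uniform on $\mathcal S$. Let $X$ be a random variable on $\mathcal X$ independent of $S$ and $U$ uniform on $\mathbb Z_q^m$. Then $q^{(k-1)D_k(P_{(h(S,X),S)}\|P_U\times P_S)} \le \sum_{l=1}^{k} S(k,l)\, q^{(k-l)(m - H_k(X))}$, where $S(k,l)$ are Stirling numbers of the second kind and $H_k(X) = \frac{1}{1-k}\log_q\sum_x P_X(x)^k$. -/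

import Mathlib

open Finset

/-- Stirling numbers of the second kind. -/
def stirling2 : ℕ → ℕ → ℕ
  | 0, 0 => 1
  | 0, _ + 1 => 0
  | _ + 1, 0 => 0
  | n + 1, l + 1 => (l + 1) * stirling2 n (l + 1) + stirling2 n l

/-- Joint pmf of the pair `(h(S,X), S)` where `S` is uniform on `𝒮` and `X ~ P` is
independent of `S`. -/
noncomputable def jointPMF {S X : Type*} [Fintype S] [Fintype X] {q m : ℕ}
    (h : S → X → (Fin m → Fin q)) (P : X → ℝ) : (Fin m → Fin q) × S → ℝ :=
  fun p => (Fintype.card S : ℝ)⁻¹ * ∑ x : X, if h p.2 x = p.1 then P x else 0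

/-- Rényi divergence of order `α > 1` (base-`q` logarithm). -/
noncomputable def renyiD {Z : Type*} [Fintype Z] (q : ℕ) (α : ℝ) (P Q : Z → ℝ) : ℝ :=
  (α - 1)⁻¹ * Real.logb q (∑ z, P z ^ α * Q z ^ (1 - α))

/-- Rényi entropy of order `α > 1` (base-`q` logarithm). -/
noncomputable def renyiH {X : Type*} [Fintype X] (q : ℕ) (α : ℝ) (P : X → ℝ) : ℝ :=
  (1 - α)⁻¹ * Real.logb q (∑ x, P x ^ α)

lemma stirling2_succ (n l : ℕ) :
    stirling2 (n + 1) (l + 1) = (l + 1) * stirling2 n (l + 1) + stirling2 n l := rfl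

lemma stirling2_zero (l : ℕ) : stirling2 0 (l + 1) = 0 := rfl

lemma stirling2_zero_right (n : ℕ) : stirling2 (n + 1) 0 = 0 := rfl

lemma stirling2_eq_zero_of_lt : ∀ {n l : ℕ}, n < l → stirling2 n l = 0 := by
  intro n
  induction n with
  | zero => intro l hl; cases l with
    | zero => omega
    | succ t => rfl
  | succ nn ih =>
    intro l hl
    cases l with
    | zero => omega
    | succ t =>
      rw [stirling2_succ, ih (by omega), ih (by omega)]
      simp

lemma stirling2_identity (n : ℕ) : ∀ t : ℕ,
    stirling2 (n + 1) (t + 1) = ∑ j ∈ range (n + 1), n.choose j * stirling2 (n - j) t := by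
  induction n with
  | zero => intro t; simp [stirling2_succ, stirling2_zero]
  | succ n ih =>
    intro t
    have key : ∑ j ∈ range (n + 2), (n+1).choose j * stirling2 (n + 1 - j) t
        = (∑ j ∈ range (n + 1), n.choose j * stirling2 (n - j) t)
          + ∑ i ∈ range (n + 1), n.choose i * stirling2 (n - i + 1) t := by
      rw [Finset.sum_range_succ' (fun j => (n+1).choose j * stirling2 (n + 1 - j) t) (n+1)]
      have h1 : ∀ j ∈ range (n + 1),
          (n+1).choose (j+1) * stirling2 (n + 1 - (j+1)) t
            = n.choose j * stirling2 (n - j) t + n.choose (j+1) * stirling2 (n - j) t := by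
        intro j hj
        rw [Nat.choose_succ_succ, Nat.add_mul]
        congr 2 <;> congr 1 <;> omega
      rw [Finset.sum_congr rfl h1, Finset.sum_add_distrib]
      have h2 : ∑ j ∈ range (n + 1), n.choose (j+1) * stirling2 (n - j) t
          + (n+1).choose 0 * stirling2 (n + 1 - 0) t
          = ∑ i ∈ range (n + 1), n.choose i * stirling2 (n - i + 1) t := by
        rw [Finset.sum_range_succ' (fun i => n.choose i * stirling2 (n - i + 1) t) n]
        have h3 : ∀ j ∈ range n,
            n.choose (j+1) * stirling2 (n - (j+1) + 1) t = n.choose (j+1) * stirling2 (n - j) t := by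
          intro j hj
          simp only [mem_range] at hj
          congr 2
          omega
        rw [Finset.sum_congr rfl h3, Finset.sum_range_succ (fun j => n.choose (j+1) * stirling2 (n - j) t) n]
        simp [Nat.choose_succ_self]
      omega
    rw [key, ← ih t]
    cases t with
    | zero =>
      have : ∀ i ∈ range (n + 1), n.choose i * stirling2 (n - i + 1) 0 = 0 := by
        intro i _; simp [stirling2_zero_right]
      rw [Finset.sum_eq_zero this]
      simp [stirling2_succ, stirling2_zero_right]
    | succ u =>
      have : ∀ i ∈ range (n + 1), n.choose i * stirling2 (n - i + 1) (u + 1)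
          = (u+1) * (n.choose i * stirling2 (n - i) (u+1)) + n.choose i * stirling2 (n - i) u := by
        intro i _; rw [stirling2_succ]; ring
      rw [Finset.sum_congr rfl this, Finset.sum_add_distrib, ← Finset.mul_sum, ← ih (u+1), ← ih u]
      rw [stirling2_succ, stirling2_succ]
      ring

lemma moment_bound {X : Type*} [Fintype X] (P : X → ℝ) (hP0 : ∀ x, 0 ≤ P x)
    (hP1 : ∑ x, P x = 1) (k : ℕ) (hk : 2 ≤ k) (b : ℕ) (hb : 1 ≤ b) (hbk : b ≤ k) :
    ∑ x, P x ^ b ≤ ((∑ x, P x ^ k) ^ ((k : ℝ) - 1)⁻¹) ^ (b - 1) := by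
  rcases eq_or_lt_of_le hb with hb1 | hb2
  · simp [← hb1, hP1]
  · have hb2 : 2 ≤ b := hb2
    have hMk0 : (0:ℝ) ≤ ∑ x, P x ^ k := sum_nonneg fun x _ => pow_nonneg (hP0 x) _
    have hbR : (1:ℝ) ≤ (b:ℝ) := by exact_mod_cast hb
    have hbR1 : (0:ℝ) < (b:ℝ) - 1 := by
      have : (2:ℝ) ≤ (b:ℝ) := by exact_mod_cast hb2
      linarith
    have hkR1 : (0:ℝ) < (k:ℝ) - 1 := by
      have : (2:ℝ) ≤ (k:ℝ) := by exact_mod_cast hk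
      linarith
    set p : ℝ := ((k:ℝ) - 1) / ((b:ℝ) - 1) with hp_def
    have hp : 1 ≤ p := by
      rw [hp_def, le_div_iff₀ hbR1]
      have : (b:ℝ) ≤ (k:ℝ) := by exact_mod_cast hbk
      linarith
    have key := Real.arith_mean_le_rpow_mean univ P (fun x => P x ^ (b-1))
      (fun i _ => hP0 i) hP1 (fun i _ => pow_nonneg (hP0 i) _) hp
    have hcast : ((b - 1 : ℕ) : ℝ) = (b:ℝ) - 1 := by
      have := Nat.cast_sub hb (R := ℝ); simpa using this
    have lhs_eq : ∑ x, P x * P x ^ (b-1) = ∑ x, P x ^ b := by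
      refine Finset.sum_congr rfl fun x _ => ?_
      rw [← pow_succ']
      congr 1
      omega
    have rhs_eq : ∑ x, P x * (P x ^ (b-1)) ^ p = ∑ x, P x ^ k := by
      refine Finset.sum_congr rfl fun x _ => ?_
      rcases eq_or_lt_of_le (hP0 x) with hx | hx
      · rw [← hx]
        rw [zero_pow (by omega : b - 1 ≠ 0), zero_pow (by omega : k ≠ 0)]
        rw [Real.zero_rpow (by positivity : p ≠ 0)]
        ring
      · rw [← Real.rpow_natCast (P x) (b-1), ← Real.rpow_mul (hP0 x), hcast]
        have : ((b:ℝ) - 1) * p = (k:ℝ) - 1 := by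
          rw [hp_def]; field_simp
        rw [this]
        nth_rewrite 1 [← Real.rpow_one (P x)]
        rw [← Real.rpow_add hx, ← Real.rpow_natCast (P x) k]
        norm_num
    rw [lhs_eq, rhs_eq] at key
    refine key.trans (le_of_eq ?_)
    rw [← Real.rpow_natCast ((∑ x, P x ^ k) ^ ((k : ℝ) - 1)⁻¹) (b-1), ← Real.rpow_mul hMk0, hcast]
    congr 1
    rw [hp_def]
    field_simp

lemma key_bound {X : Type*} [Fintype X] [DecidableEq X] (P : X → ℝ)
    (hP0 : ∀ x, 0 ≤ P x) (hP1 : ∑ x, P x = 1) (k : ℕ) (hk : 2 ≤ k) :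
    ∀ n : ℕ, n ≤ k → ∀ (ι : Type) (_ : Fintype ι) (_ : DecidableEq ι),
      Fintype.card ι = n → ∀ l : ℕ,
    (∑ x : ι → X, if (univ.image x).card = l then ∏ i, P (x i) else 0)
      ≤ stirling2 n l * ((∑ x, P x ^ k) ^ ((k : ℝ) - 1)⁻¹) ^ (n - l) := by
  have hMk0 : (0:ℝ) ≤ ∑ x, P x ^ k := sum_nonneg fun x _ => pow_nonneg (hP0 x) _
  set mR : ℝ := (∑ x, P x ^ k) ^ ((k : ℝ) - 1)⁻¹ with hmR
  have hmR0 : 0 ≤ mR := Real.rpow_nonneg hMk0 _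
  intro n
  induction n using Nat.strong_induction_on with
  | _ n IH =>
    intro hn ι instF instD hcard l
    cases n with
    | zero =>
      haveI : IsEmpty ι := Fintype.card_eq_zero_iff.mp hcard
      have huniv : (univ : Finset ι) = ∅ := univ_eq_empty
      have hcardfun : Fintype.card (ι → X) = 1 := by
        simp [Fintype.card_fun, hcard]
      cases l with
      | zero =>
        have : ∀ x : ι → X, (if (univ.image x).card = 0 then ∏ i, P (x i) else 0) = 1 := by
          intro x
          simp [huniv]
        rw [Finset.sum_congr rfl fun x _ => this x, Finset.sum_const, card_univ, hcardfun]
        simp [stirling2]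
      | succ t =>
        have : ∀ x : ι → X, (if (univ.image x).card = t + 1 then ∏ i, P (x i) else 0) = 0 := by
          intro x
          simp [huniv]
        rw [Finset.sum_congr rfl fun x _ => this x, Finset.sum_const]
        simp [stirling2]
    | succ nn =>
      haveI : Nonempty ι := Fintype.card_pos_iff.mp (by omega)
      obtain ⟨i₀⟩ := ‹Nonempty ι›
      cases l with
      | zero =>
        have hz : ∀ x : ι → X, (if (univ.image x).card = 0 then ∏ i, P (x i) else 0) = 0 := by
          intro x
          have : (univ.image x).Nonempty := (univ_nonempty (α := ι)).image x
          simp [Finset.card_eq_zero, this.ne_empty]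
        rw [Finset.sum_congr rfl fun x _ => hz x]
        simp [stirling2]
      | succ t =>
        -- main case
        set κ : (ι → X) → Finset ι := fun x => univ.filter (fun i => x i = x i₀) with hκ
        have hmaps : ∀ x ∈ (univ : Finset (ι → X)),
            κ x ∈ (univ : Finset (Finset ι)).filter (fun A => i₀ ∈ A) := by
          intro x _
          simp [hκ]
        rw [← Finset.sum_fiberwise_of_maps_to hmaps]
        have perA : ∀ A ∈ (univ : Finset (Finset ι)).filter (fun A => i₀ ∈ A),
            (∑ x ∈ univ.filter (fun x : ι → X => κ x = A),
              if (univ.image x).card = t + 1 then ∏ i, P (x i) else 0)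
            ≤ (stirling2 (nn + 1 - A.card) t : ℝ) * mR ^ (nn - t) := by
          intro A hA
          rw [Finset.mem_filter] at hA
          have hi₀A : i₀ ∈ A := hA.2
          have hb1 : 1 ≤ A.card := Finset.card_pos.mpr ⟨i₀, hi₀A⟩
          have hbn : A.card ≤ nn + 1 := by
            rw [← hcard]; exact Finset.card_le_univ A
          -- rewrite the ite-sum as a sum over a refined filter
          have step0 : (∑ x ∈ univ.filter (fun x : ι → X => κ x = A),
                if (univ.image x).card = t + 1 then ∏ i, P (x i) else 0)
              = ∑ x ∈ univ.filter (fun x : ι → X => κ x = A ∧ (univ.image x).card = t + 1),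
                  ∏ i, P (x i) := by
            rw [Finset.sum_filter, Finset.sum_filter]
            refine Finset.sum_congr rfl fun x _ => ?_
            by_cases h1 : κ x = A <;> by_cases h2 : (univ.image x).card = t + 1 <;>
              simp [h1, h2]
          rw [step0]
          set s₁ := univ.filter (fun x : ι → X => κ x = A ∧ (univ.image x).card = t + 1) with hs₁
          set e : (ι → X) → X × ({i // i ∈ Aᶜ} → X) := fun x => (x i₀, fun i => x i.1) with he
          have hxiA : ∀ x ∈ s₁, ∀ i ∈ A, x i = x i₀ := by
            intro x hx i hi
            rw [hs₁, Finset.mem_filter] at hx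
            have := hx.2.1
            rw [hκ] at this
            have := this ▸ hi
            simpa using (Finset.mem_filter.mp this).2
          have hxiAc : ∀ x ∈ s₁, ∀ i, i ∉ A → x i ≠ x i₀ := by
            intro x hx i hi
            rw [hs₁, Finset.mem_filter] at hx
            intro hcon
            apply hi
            rw [← hx.2.1, hκ]
            simp [hcon]
          have hinj : Set.InjOn e s₁ := by
            intro x hx y hy hxy
            have h1 : x i₀ = y i₀ := congrArg Prod.fst hxy
            have h2 := congrArg Prod.snd hxy
            funext i
            by_cases hiA : i ∈ A
            · rw [hxiA x hx i hiA, hxiA y hy i hiA, h1]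
            · have : i ∈ Aᶜ := Finset.mem_compl.mpr hiA
              exact congrFun h2 ⟨i, this⟩
          have hval : ∀ x ∈ s₁, ∏ i, P (x i)
              = P (x i₀) ^ A.card * ∏ i : {i // i ∈ Aᶜ}, P (x i.1) := by
            intro x hx
            rw [← Finset.prod_mul_prod_compl A (fun i => P (x i))]
            congr 1
            · rw [Finset.prod_congr rfl (fun i hi => by rw [hxiA x hx i hi]),
                Finset.prod_const]
            · exact (Finset.prod_coe_sort Aᶜ (fun i => P (x i))).symm
          have himg : ∀ x ∈ s₁, e x ∈ (univ : Finset X) ×ˢ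
              (univ.filter (fun x' : {i // i ∈ Aᶜ} → X => (univ.image x').card = t)) := by
            intro x hx
            rw [Finset.mem_product]
            refine ⟨Finset.mem_univ _, ?_⟩
            rw [Finset.mem_filter]
            refine ⟨Finset.mem_univ _, ?_⟩
            have himg_eq : (univ.image fun i : {i // i ∈ Aᶜ} => x i.1)
                = (univ.image x).erase (x i₀) := by
              ext v
              simp only [Finset.mem_image, Finset.mem_erase, Finset.mem_univ, true_and]
              constructor
              · rintro ⟨⟨i, hic⟩, rfl⟩
                exact ⟨hxiAc x hx i (Finset.mem_compl.mp hic), ⟨i, rfl⟩⟩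
              · rintro ⟨hne, ⟨i, rfl⟩⟩
                have : i ∉ A := fun hiA => hne (hxiA x hx i hiA)
                exact ⟨⟨i, Finset.mem_compl.mpr this⟩, rfl⟩
            rw [himg_eq, Finset.card_erase_of_mem (Finset.mem_image_of_mem x (Finset.mem_univ i₀))]
            rw [hs₁, Finset.mem_filter] at hx
            rw [hx.2.2]
            omega
          have step1 : (∑ x ∈ s₁, ∏ i, P (x i))
              ≤ (∑ y, P y ^ A.card) *
                ∑ x' : {i // i ∈ Aᶜ} → X,
                  if (univ.image x').card = t then ∏ i, P (x' i) else 0 := by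
            have e1 : (∑ x ∈ s₁, ∏ i, P (x i))
                = ∑ p ∈ s₁.image e, P p.1 ^ A.card * ∏ i, P (p.2 i) := by
              rw [Finset.sum_image (fun x hx y hy => hinj hx hy)]
              exact Finset.sum_congr rfl hval
            rw [e1]
            have e2 : s₁.image e ⊆ (univ : Finset X) ×ˢ
                (univ.filter (fun x' : {i // i ∈ Aᶜ} → X => (univ.image x').card = t)) := by
              intro p hp
              obtain ⟨x, hx, rfl⟩ := Finset.mem_image.mp hp
              exact himg x hx
            refine le_trans (Finset.sum_le_sum_of_subset_of_nonneg e2 ?_) ?_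
            · intro p _ _
              have h1 : (0:ℝ) ≤ P p.1 ^ A.card := pow_nonneg (hP0 _) _
              have h2 : (0:ℝ) ≤ ∏ i, P (p.2 i) := Finset.prod_nonneg fun i _ => hP0 _
              positivity
            · rw [Finset.sum_product]
              rw [Finset.sum_mul]
              refine Finset.sum_le_sum fun y _ => ?_
              rw [Finset.mul_sum, Finset.sum_filter]
              refine Finset.sum_le_sum fun x' _ => ?_
              rw [mul_ite, mul_zero]
          -- apply IH and moment bound
          have hbk : A.card ≤ k := le_trans hbn (by omega)
          have hmom : (∑ y, P y ^ A.card) ≤ mR ^ (A.card - 1) :=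
            moment_bound P hP0 hP1 k hk A.card hb1 hbk
          have hcard' : Fintype.card {i // i ∈ Aᶜ} = nn + 1 - A.card := by
            rw [Fintype.card_coe, Finset.card_compl, hcard]
          have hIH := IH (nn + 1 - A.card) (by omega) (by omega)
            {i // i ∈ Aᶜ} inferInstance inferInstance hcard' t
          have hsum_nonneg : (0:ℝ) ≤ ∑ x' : {i // i ∈ Aᶜ} → X,
              if (univ.image x').card = t then ∏ i, P (x' i) else 0 := by
            refine Finset.sum_nonneg fun x' _ => ?_
            split_ifs
            · exact Finset.prod_nonneg fun i _ => hP0 _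
            · exact le_rfl
          have hmom_nonneg : (0:ℝ) ≤ ∑ y, P y ^ A.card :=
            Finset.sum_nonneg fun y _ => pow_nonneg (hP0 y) _
          have step2 : (∑ x ∈ s₁, ∏ i, P (x i))
              ≤ mR ^ (A.card - 1) * ((stirling2 (nn + 1 - A.card) t : ℝ)
                  * mR ^ (nn + 1 - A.card - t)) :=
            le_trans step1 (mul_le_mul hmom hIH hsum_nonneg (le_trans hmom_nonneg hmom))
          refine le_trans step2 ?_
          by_cases hts : t ≤ nn + 1 - A.card
          · have : mR ^ (A.card - 1) * ((stirling2 (nn + 1 - A.card) t : ℝ)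
                * mR ^ (nn + 1 - A.card - t))
              = (stirling2 (nn + 1 - A.card) t : ℝ) * mR ^ (nn - t) := by
              rw [mul_comm (mR ^ (A.card - 1)), mul_assoc, ← pow_add]
              congr 2
              omega
            rw [this]
          · rw [stirling2_eq_zero_of_lt (by omega)]
            simp
        refine le_trans (Finset.sum_le_sum perA) ?_
        rw [← Finset.sum_mul]
        have count : (∑ A ∈ (univ : Finset (Finset ι)).filter (fun A => i₀ ∈ A),
            (stirling2 (nn + 1 - A.card) t : ℝ)) = (stirling2 (nn + 1) (t + 1) : ℝ) := by
          rw [← Nat.cast_sum]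
          norm_cast
          have reindex : (∑ A ∈ (univ : Finset (Finset ι)).filter (fun A => i₀ ∈ A),
              stirling2 (nn + 1 - A.card) t)
              = ∑ B ∈ ((univ : Finset ι).erase i₀).powerset,
                  stirling2 (nn + 1 - (B.card + 1)) t := by
            refine Finset.sum_nbij' (fun A => A.erase i₀) (fun B => insert i₀ B) ?_ ?_ ?_ ?_ ?_
            · intro A hA
              rw [Finset.mem_filter] at hA
              rw [Finset.mem_powerset]
              exact Finset.erase_subset_erase i₀ (Finset.subset_univ A)
            · intro B hB
              rw [Finset.mem_powerset] at hB
              rw [Finset.mem_filter]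
              exact ⟨Finset.mem_univ _, Finset.mem_insert_self i₀ B⟩
            · intro A hA
              rw [Finset.mem_filter] at hA
              exact Finset.insert_erase hA.2
            · intro B hB
              rw [Finset.mem_powerset] at hB
              refine Finset.erase_insert fun hi => ?_
              exact (Finset.notMem_erase i₀ univ) (hB hi)
            · intro A hA
              rw [Finset.mem_filter] at hA
              congr 2
              rw [Finset.card_erase_of_mem hA.2]
              have : 1 ≤ A.card := Finset.card_pos.mpr ⟨i₀, hA.2⟩
              omega
          rw [reindex]
          have hpcard : ((univ : Finset ι).erase i₀).card = nn := by
            rw [Finset.card_erase_of_mem (Finset.mem_univ i₀), card_univ, hcard]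
            omega
          rw [Finset.sum_powerset, hpcard, stirling2_identity nn t]
          refine Finset.sum_congr rfl fun j hj => ?_
          have hB' : ∀ B ∈ Finset.powersetCard j ((univ : Finset ι).erase i₀),
              stirling2 (nn + 1 - (B.card + 1)) t = stirling2 (nn - j) t := by
            intro B hB
            rw [(Finset.mem_powersetCard.mp hB).2]
            congr 1
            omega
          rw [Finset.sum_congr rfl hB', Finset.sum_const, Finset.card_powersetCard, hpcard,
            smul_eq_mul]
        rw [count]
        have : nn + 1 - (t + 1) = nn - t := by omega
        rw [this]

/-- Theorem 3.2 (integer-order leftover hash lemma): for a `k*`-universal hash function,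
`q^{(k-1)·D_k(P_{(h(S,X),S)} ‖ P_U × P_S)} ≤ ∑_{l=1}^k S(k,l) q^{(k-l)(m - H_k(X))}`. -/
theorem lhl_integer_order {S X : Type*} [Fintype S] [Fintype X] [Nonempty S] [Nonempty X]
    (q m k : ℕ) (hq : 2 ≤ q) (hm : 1 ≤ m) (hk : 2 ≤ k)
    (h : S → X → (Fin m → Fin q)) (P : X → ℝ)
    (hP0 : ∀ x, 0 ≤ P x) (hP1 : ∑ x, P x = 1)
    (hUniv : ∀ l : ℕ, 2 ≤ l → l ≤ k → ∀ x : Fin l → X, Function.Injective x →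
      ((univ.filter fun s : S => ∀ i j, h s (x i) = h s (x j)).card : ℝ)
          / (Fintype.card S : ℝ)
        ≤ ((q : ℝ) ^ (m * (l - 1)))⁻¹) :
    (q : ℝ) ^ (((k : ℝ) - 1) * renyiD q k (jointPMF h P)
        (fun _ => ((q : ℝ) ^ m)⁻¹ * (Fintype.card S : ℝ)⁻¹))
      ≤ ∑ l ∈ Finset.Icc 1 k, (stirling2 k l : ℝ) *
          (q : ℝ) ^ (((k : ℝ) - (l : ℝ)) * ((m : ℝ) - renyiH q k P)) := by
  classical
  haveI : NeZero k := ⟨by omega⟩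
  set N : ℝ := (Fintype.card S : ℝ) with hN
  have hN0 : (0:ℝ) < N := by
    rw [hN]; exact_mod_cast Fintype.card_pos
  have hq1 : (1:ℝ) < (q:ℝ) := by exact_mod_cast (by omega : 1 < q)
  have hq0 : (0:ℝ) < (q:ℝ) := lt_trans one_pos hq1
  set Q0 : ℝ := (q:ℝ) ^ m with hQ0
  have hQ00 : (0:ℝ) < Q0 := pow_pos hq0 m
  have hk1 : ((k:ℝ) - 1) ≠ 0 := by
    have : (2:ℝ) ≤ (k:ℝ) := by exact_mod_cast hk
    intro hcon; linarith [this]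
  set J : (Fin m → Fin q) × S → ℝ := jointPMF h P with hJ
  have hJ0 : ∀ z, 0 ≤ J z := by
    intro z
    refine mul_nonneg (inv_nonneg.2 hN0.le) (Finset.sum_nonneg fun x _ => ?_)
    split_ifs
    exacts [hP0 x, le_rfl]
  set c0 : ℝ := Q0⁻¹ * N⁻¹ with hc0
  have hc00 : (0:ℝ) < c0 := mul_pos (inv_pos.2 hQ00) (inv_pos.2 hN0)
  set Sig : ℝ := ∑ z, J z ^ ((k:ℕ):ℝ) * c0 ^ (1 - ((k:ℕ):ℝ)) with hSig
  -- positivity of Sig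
  obtain ⟨x₀, -, hx₀⟩ := Finset.exists_ne_zero_of_sum_ne_zero (by rw [hP1]; exact one_ne_zero)
  have hx₀pos : 0 < P x₀ := lt_of_le_of_ne (hP0 x₀) (Ne.symm hx₀)
  obtain ⟨s₀⟩ := (inferInstance : Nonempty S)
  have hJz₀ : 0 < J (h s₀ x₀, s₀) := by
    refine mul_pos (inv_pos.2 hN0) (lt_of_lt_of_le hx₀pos ?_)
    have := Finset.single_le_sum (f := fun x => if h s₀ x = h s₀ x₀ then P x else 0)
      (fun x _ => by split_ifs; exacts [hP0 x, le_rfl]) (Finset.mem_univ x₀)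
    simpa using this
  have hSigpos : 0 < Sig := by
    rw [hSig]
    refine Finset.sum_pos' (fun z _ => mul_nonneg (Real.rpow_nonneg (hJ0 z) _)
      (Real.rpow_nonneg hc00.le _)) ⟨(h s₀ x₀, s₀), Finset.mem_univ _, ?_⟩
    exact mul_pos (Real.rpow_pos_of_pos hJz₀ _) (Real.rpow_pos_of_pos hc00 _)
  -- LHS = Sig
  have lhs_eq : (q : ℝ) ^ (((k : ℝ) - 1) * renyiD q k J (fun _ => Q0⁻¹ * N⁻¹)) = Sig := by
    have hre : renyiD q k J (fun _ => Q0⁻¹ * N⁻¹) = ((k:ℝ)-1)⁻¹ * Real.logb q Sig := by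
      simp only [renyiD, hSig, hc0]
    rw [hre, ← mul_assoc, mul_inv_cancel₀ hk1, one_mul]
    exact Real.rpow_logb hq0 hq1.ne' hSigpos
  rw [lhs_eq]
  -- convert the rpow expressions to monomials
  have step_pow : Sig = (∑ z : (Fin m → Fin q) × S, J z ^ (k:ℕ)) * (Q0 * N) ^ (k - 1) := by
    rw [hSig, Finset.sum_mul]
    refine Finset.sum_congr rfl fun z _ => ?_
    congr 1
    · exact Real.rpow_natCast _ _
    · have h1 : (1 : ℝ) - ((k:ℕ):ℝ) = -(((k - 1:ℕ):ℝ)) := by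
        have : ((k - 1:ℕ):ℝ) = (k:ℝ) - 1 := by
          have := Nat.cast_sub (by omega : 1 ≤ k) (R := ℝ); simpa using this
        rw [this]; ring
      rw [h1, Real.rpow_neg hc00.le, ← Real.inv_rpow hc00.le, Real.rpow_natCast]
      congr 1
      rw [hc0]
      field_simp
  -- expand J z ^ k combinatorially
  set D : (Fin k → X) → ℕ :=
    fun g => (univ.filter fun s : S => ∀ i j, h s (g i) = h s (g j)).card with hD
  have expand : (∑ z : (Fin m → Fin q) × S, J z ^ (k:ℕ))
      = (N⁻¹) ^ k * ∑ g : Fin k → X, (D g : ℝ) * ∏ i, P (g i) := by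
    have e1 : ∀ z : (Fin m → Fin q) × S, J z ^ (k:ℕ)
        = (N⁻¹) ^ k * ∑ g : Fin k → X,
            if ∀ i, h z.2 (g i) = z.1 then ∏ i, P (g i) else 0 := by
      intro z
      rw [hJ, jointPMF, mul_pow, Fintype.sum_pow]
      congr 1
      refine Finset.sum_congr rfl fun g _ => ?_
      simp [Fintype.prod_ite_zero]
    rw [Finset.sum_congr rfl fun z _ => e1 z, ← Finset.mul_sum]
    congr 1
    rw [Fintype.sum_prod_type]
    rw [Finset.sum_comm]
    have e2 : ∀ s : S, (∑ u : Fin m → Fin q, ∑ g : Fin k → X,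
        if ∀ i, h s (g i) = u then ∏ i, P (g i) else 0)
        = ∑ g : Fin k → X, if ∀ i j, h s (g i) = h s (g j) then ∏ i, P (g i) else 0 := by
      intro s
      rw [Finset.sum_comm]
      refine Finset.sum_congr rfl fun g _ => ?_
      by_cases hc : ∀ i j : Fin k, h s (g i) = h s (g j)
      · have hiff : ∀ u, (∀ i, h s (g i) = u) ↔ u = h s (g 0) :=
          fun u => ⟨fun hA => (hA 0).symm, fun hu i => (hc i 0).trans hu.symm⟩
        simp only [hiff, if_pos hc]
        rw [Finset.sum_ite_eq' univ (h s (g 0)) (fun _ => ∏ i, P (g i))]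
        simp
      · have h1 : ∀ u, ¬(∀ i, h s (g i) = u) :=
          fun u hA => hc fun i j => (hA i).trans (hA j).symm
        simp [h1, hc]
    rw [Finset.sum_congr rfl fun s _ => e2 s, Finset.sum_comm]
    refine Finset.sum_congr rfl fun g _ => ?_
    rw [← Finset.sum_filter, Finset.sum_const, nsmul_eq_mul, hD]
  rw [step_pow, expand]
  -- per-tuple bound
  have hDle : ∀ g : Fin k → X, (D g : ℝ) ≤ N * (Q0 ^ ((univ.image g).card - 1))⁻¹ := by
    intro g
    set l := (univ.image g).card with hl
    have hl1 : 1 ≤ l := by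
      rw [hl]
      exact Finset.card_pos.mpr ((Finset.univ_nonempty).image g)
    have hlk : l ≤ k := by
      rw [hl]
      calc (univ.image g).card ≤ (univ : Finset (Fin k)).card := Finset.card_image_le
        _ = k := by rw [Finset.card_univ, Fintype.card_fin]
    rcases eq_or_lt_of_le hl1 with hl1' | hl2
    · have : (D g : ℝ) ≤ N := by
        rw [hD, hN]
        exact_mod_cast Finset.card_filter_le _ _
      rw [← hl1']
      simpa using this
    · have hl2 : 2 ≤ l := hl2
      have hcoe : Fintype.card ↥(univ.image g) = l := by
        rw [Fintype.card_coe, hl]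
      set e := (Fintype.equivFinOfCardEq hcoe).symm with he
      set x' : Fin l → X := fun j => (e j : X) with hx'
      have hxinj : Function.Injective x' := fun a b hab => e.injective (Subtype.ext hab)
      have hfe : (univ.filter fun s : S => ∀ i j, h s (g i) = h s (g j))
          = univ.filter fun s : S => ∀ i j, h s (x' i) = h s (x' j) := by
        refine Finset.filter_congr fun s _ => ?_
        constructor
        · intro hg i j
          obtain ⟨a, -, ha⟩ := Finset.mem_image.mp (e i).2
          obtain ⟨b, -, hb⟩ := Finset.mem_image.mp (e j).2
          show h s ((e i : X)) = h s ((e j : X))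
          rw [← ha, ← hb]
          exact hg a b
        · intro hx i j
          have mi : g i ∈ univ.image g := Finset.mem_image_of_mem g (Finset.mem_univ i)
          have mj : g j ∈ univ.image g := Finset.mem_image_of_mem g (Finset.mem_univ j)
          have hgi : g i = x' (e.symm ⟨g i, mi⟩) := by
            show g i = ((e (e.symm ⟨g i, mi⟩)) : X)
            rw [Equiv.apply_symm_apply]
          have hgj : g j = x' (e.symm ⟨g j, mj⟩) := by
            show g j = ((e (e.symm ⟨g j, mj⟩)) : X)
            rw [Equiv.apply_symm_apply]
          rw [hgi, hgj]
          exact hx _ _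
      have huniv := hUniv l hl2 hlk x' hxinj
      rw [← hfe] at huniv
      rw [div_le_iff₀ hN0] at huniv
      have hqml : (q:ℝ) ^ (m * (l - 1)) = Q0 ^ (l - 1) := by
        rw [hQ0, ← pow_mul]
      rw [hqml] at huniv
      calc (D g : ℝ) = ((univ.filter fun s : S => ∀ i j, h s (g i) = h s (g j)).card : ℝ) := by
            rw [hD]
        _ ≤ (Q0 ^ (l - 1))⁻¹ * N := huniv
        _ = N * (Q0 ^ (l - 1))⁻¹ := by ring
  -- termwise estimate
  have main_ineq : (N⁻¹) ^ k * (∑ g : Fin k → X, (D g : ℝ) * ∏ i, P (g i)) * (Q0 * N) ^ (k-1)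
      ≤ ∑ g : Fin k → X, Q0 ^ (k - (univ.image g).card) * ∏ i, P (g i) := by
    rw [Finset.mul_sum, Finset.sum_mul]
    refine Finset.sum_le_sum fun g _ => ?_
    set l := (univ.image g).card with hl
    have hl1 : 1 ≤ l := by
      rw [hl]; exact Finset.card_pos.mpr ((Finset.univ_nonempty).image g)
    have hlk : l ≤ k := by
      rw [hl]
      calc (univ.image g).card ≤ (univ : Finset (Fin k)).card := Finset.card_image_le
        _ = k := by rw [Finset.card_univ, Fintype.card_fin]
    have hprod0 : (0:ℝ) ≤ ∏ i, P (g i) := Finset.prod_nonneg fun i _ => hP0 _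
    have hcoef : (N⁻¹) ^ k * (D g : ℝ) * (Q0 * N) ^ (k-1) ≤ Q0 ^ (k - l) := by
      have step : (N⁻¹) ^ k * (D g : ℝ) * (Q0 * N) ^ (k-1)
          ≤ (N⁻¹) ^ k * (N * (Q0 ^ (l - 1))⁻¹) * (Q0 * N) ^ (k-1) := by
        have h1 : (0:ℝ) ≤ (N⁻¹) ^ k := by positivity
        have h2 : (0:ℝ) ≤ (Q0 * N) ^ (k-1) := by positivity
        exact mul_le_mul_of_nonneg_right
          (mul_le_mul_of_nonneg_left (hDle g) h1) h2
      refine le_trans step (le_of_eq ?_)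
      have hQ0ne : Q0 ≠ 0 := ne_of_gt hQ00
      have hNne : N ≠ 0 := ne_of_gt hN0
      have hexp : Q0 ^ (k-1) = Q0 ^ (k - l) * Q0 ^ (l-1) := by
        rw [← pow_add]
        congr 1
        omega
      have hNk : N ^ k = N ^ (k-1) * N := by
        rw [← pow_succ]
        congr 1
        omega
      rw [mul_pow Q0 N, hexp, inv_pow, hNk]
      field_simp
    calc (N⁻¹) ^ k * ((D g : ℝ) * ∏ i, P (g i)) * (Q0 * N) ^ (k-1)
        = ((N⁻¹) ^ k * (D g : ℝ) * (Q0 * N) ^ (k-1)) * ∏ i, P (g i) := by ring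
      _ ≤ Q0 ^ (k - l) * ∏ i, P (g i) := mul_le_mul_of_nonneg_right hcoef hprod0
  refine le_trans main_ineq ?_
  -- fiberwise decomposition
  have fiber : (∑ g : Fin k → X, Q0 ^ (k - (univ.image g).card) * ∏ i, P (g i))
      = ∑ l ∈ Finset.Icc 1 k, ∑ g ∈ univ.filter
          (fun g : Fin k → X => (univ.image g).card = l),
            Q0 ^ (k - (univ.image g).card) * ∏ i, P (g i) := by
    rw [Finset.sum_fiberwise_of_maps_to]
    intro g _
    rw [Finset.mem_Icc]
    constructor
    · exact Finset.card_pos.mpr ((Finset.univ_nonempty).image g)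
    · calc (univ.image g).card ≤ (univ : Finset (Fin k)).card := Finset.card_image_le
        _ = k := by rw [Finset.card_univ, Fintype.card_fin]
  rw [fiber]
  refine Finset.sum_le_sum fun l hl => ?_
  rw [Finset.mem_Icc] at hl
  -- constants for the entropy part
  set Mk : ℝ := ∑ x, P x ^ (k:ℕ) with hMk
  have hMk0 : 0 ≤ Mk := Finset.sum_nonneg fun x _ => pow_nonneg (hP0 x) _
  have hMkpos : 0 < Mk := by
    rw [hMk]
    refine Finset.sum_pos' (fun x _ => pow_nonneg (hP0 x) _) ⟨x₀, Finset.mem_univ _, ?_⟩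
    exact pow_pos hx₀pos k
  set mR : ℝ := Mk ^ ((k : ℝ) - 1)⁻¹ with hmR
  have hmR0 : 0 ≤ mR := Real.rpow_nonneg hMk0 _
  have inner : (∑ g ∈ univ.filter (fun g : Fin k → X => (univ.image g).card = l),
      Q0 ^ (k - (univ.image g).card) * ∏ i, P (g i))
      ≤ Q0 ^ (k - l) * ((stirling2 k l : ℝ) * mR ^ (k - l)) := by
    have e1 : (∑ g ∈ univ.filter (fun g : Fin k → X => (univ.image g).card = l),
        Q0 ^ (k - (univ.image g).card) * ∏ i, P (g i))
        = Q0 ^ (k - l) * ∑ g : Fin k → X,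
            if (univ.image g).card = l then ∏ i, P (g i) else 0 := by
      rw [Finset.sum_filter, Finset.mul_sum]
      refine Finset.sum_congr rfl fun g _ => ?_
      by_cases hc : (univ.image g).card = l
      · rw [if_pos hc, if_pos hc, hc]
      · rw [if_neg hc, if_neg hc, mul_zero]
    rw [e1]
    refine mul_le_mul_of_nonneg_left ?_ (by positivity)
    rw [hmR, hMk]
    exact key_bound P hP0 hP1 k hk k le_rfl (Fin k) inferInstance inferInstance
      (Fintype.card_fin k) l
  refine le_trans inner (le_of_eq ?_)
  -- final identity
  have hcast : ((k - l : ℕ) : ℝ) = (k:ℝ) - (l:ℝ) := by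
    have := Nat.cast_sub hl.2 (R := ℝ); simpa using this
  have hH : renyiH q k P = (1 - (k:ℝ))⁻¹ * Real.logb q Mk := by
    rw [renyiH, hMk]
    congr 2
    exact Finset.sum_congr rfl fun x _ => Real.rpow_natCast _ _
  rw [hH]
  have hexp : ((k : ℝ) - (l : ℝ)) * ((m : ℝ) - (1 - (k:ℝ))⁻¹ * Real.logb q Mk)
      = ((k - l) * m : ℕ) + Real.logb q Mk * (((k - l : ℕ):ℝ) * ((k:ℝ) - 1)⁻¹) := by
    have h1 : (1 - (k:ℝ))⁻¹ = -(((k:ℝ) - 1)⁻¹) := by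
      rw [show (1 - (k:ℝ)) = -((k:ℝ) - 1) by ring, inv_neg]
    rw [h1]
    push_cast [hcast]
    ring
  have hfin1 : (q:ℝ) ^ ((k - l) * m) = Q0 ^ (k - l) := by
    rw [hQ0, ← pow_mul, Nat.mul_comm]
  have hfin2 : (q:ℝ) ^ (Real.logb q Mk * (((k - l : ℕ):ℝ) * ((k:ℝ) - 1)⁻¹)) = mR ^ (k - l) := by
    rw [Real.rpow_mul hq0.le, Real.rpow_logb hq0 hq1.ne' hMkpos, hmR,
      ← Real.rpow_natCast (Mk ^ ((k:ℝ)-1)⁻¹) (k - l), ← Real.rpow_mul hMk0]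
    congr 1
    ring
  rw [hexp, Real.rpow_add hq0, Real.rpow_natCast, hfin1, hfin2]
  ring
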